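/- On a ring Λ of L ≥ 6 sites, any configuration μ ∈ {0,1}^L in the image of the tiling-configuration map (i.e., arising from a VMD tiling by voids (0), monomers (100), and dimers (011000)) satisfies μₓ·μₓ₊₂ = 0 for all x ∈ ℤ/Lℤ. -/
import Mathlib


/-- The three tile types: void V = (0), monomer M = (100), dimer D = (011000). -/
inductive VMDTile | V | M | D
deriving DecidableEq

/-- The length of a tile. -/
def VMDTile.len : VMDTile → ℕ
  | .V => 1
  | .M => 3
  | .D => 6

/-- The occupation pattern of a tile at offset k. -/
def VMDTile.pat : VMDTile → ℕ → Fin 2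
  | .V, _ => 0
  | .M, k => if k = 0 then 1 else 0
  | .D, k => if k = 1 ∨ k = 2 then 1 else 0

/-- `s` is a VMD tiling of the ring ℤ/Lℤ reproducing the configuration `μ`. -/
def IsVMDTiling {L : ℕ} (μ : ZMod L → Fin 2) (s : ZMod L → Option VMDTile) : Prop :=
  (∀ y : ZMod L, ∃! p : ZMod L × VMDTile,
      s p.1 = some p.2 ∧ ∃ k : ℕ, k < p.2.len ∧ y = p.1 + (k : ZMod L)) ∧
  (∀ x : ZMod L, ∀ τ : VMDTile, s x = some τ →
      ∀ k : ℕ, k < τ.len → μ (x + (k : ZMod L)) = τ.pat k)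

/-- any configuration arising from a VMD tiling of a ring of
L ≥ 6 sites satisfies μₓ·μₓ₊₂ = 0 for all x. -/
theorem stmt_18 (L : ℕ) (hL : 6 ≤ L) (μ : ZMod L → Fin 2)
    (s : ZMod L → Option VMDTile) (hs : IsVMDTiling μ s) :
    ∀ x : ZMod L, ((μ x : ℕ)) * ((μ (x + 2) : ℕ)) = 0 := by
  intro x
  have two : ∀ a : Fin 2, a = 0 ∨ a = 1 := by decide
  rcases two (μ x) with h0 | hx1
  · simp [h0]
  rcases two (μ (x + 2)) with h0 | hx2
  · simp [h0]
  exfalso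
  obtain ⟨⟨p, τ⟩, ⟨hp, k, hk, hxk⟩, -⟩ := hs.1 x
  have key : ∀ m : ℕ, m < τ.len → μ (p + (m : ZMod L)) = τ.pat m := hs.2 p τ hp
  have h1 : (1 : Fin 2) = τ.pat k := by rw [← hx1, hxk]; exact key k hk
  have step : ∀ m : ℕ, k + 2 = m → m < τ.len → (1 : Fin 2) = τ.pat m := by
    intro m hm hml
    have h2 := key m hml
    rw [show p + ((m : ℕ) : ZMod L) = x + 2 by
      rw [hxk, ← hm]; push_cast; ring, hx2] at h2
    exact h2
  cases τ <;> simp only [VMDTile.len] at hk <;> interval_cases k <;>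
      first
        | exact absurd (step _ rfl (by decide)) (by decide)
        | simp [VMDTile.pat] at h1
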